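/- Every B-action θ is continuous at the point (0,0): if (s_n, t_n) → (0,0) in [0,∞) × [0,∞), then θ(s_n, t_n) → 0. -/

import Mathlib

open Filter Topology

/-- Every B-action is continuous at (0,0): if (sₙ,tₙ) → (0,0) in [0,∞)², then
θ(sₙ,tₙ) → 0. -/
theorem Baction_continuous_at_zero (θ : ℝ → ℝ → ℝ)
    (hc1 : ∀ t ≥ (0:ℝ), ContinuousOn (fun s => θ s t) (Set.Ici 0))
    (hc2 : ∀ s ≥ (0:ℝ), ContinuousOn (fun t => θ s t) (Set.Ici 0))
    (hnn : ∀ s t, 0 ≤ s → 0 ≤ t → 0 ≤ θ s t)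
    (h00 : θ 0 0 = 0)
    (hsymm : ∀ s t, 0 ≤ s → 0 ≤ t → θ s t = θ t s)
    (hmono : ∀ x y s t, 0 ≤ x → 0 ≤ y → 0 ≤ s → 0 ≤ t →
      ((x ≤ s ∧ y < t) ∨ (x < s ∧ y ≤ t)) → θ x y < θ s t)
    (hsur : ∀ m, (∃ s t, 0 ≤ s ∧ 0 ≤ t ∧ θ s t = m) →
      ∀ t, 0 ≤ t → t ≤ m → ∃ s, 0 ≤ s ∧ s ≤ m ∧ θ s t = m)
    (hle : ∀ s > (0:ℝ), θ s 0 ≤ s)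
    (s t : ℕ → ℝ) (hs : ∀ n, 0 ≤ s n) (ht : ∀ n, 0 ≤ t n)
    (hs0 : Tendsto s atTop (𝓝 0)) (ht0 : Tendsto t atTop (𝓝 0)) :
    Tendsto (fun n => θ (s n) (t n)) atTop (𝓝 0) := by
  rw [Metric.tendsto_nhds]
  intro ε hε
  -- continuity of t ↦ θ (ε/2) t at 0 from the right
  have hε2 : (0:ℝ) < ε / 2 := by positivity
  have hcont : ContinuousWithinAt (fun t => θ (ε/2) t) (Set.Ici 0) 0 :=
    (hc2 (ε/2) hε2.le) 0 Set.self_mem_Ici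
  have hval : θ (ε/2) 0 < ε := lt_of_le_of_lt (hle (ε/2) hε2) (by linarith)
  have hev : ∀ᶠ x in 𝓝[≥] (0:ℝ), θ (ε/2) x < ε :=
    hcont.eventually_lt_const hval
  -- extract δ > 0 with θ (ε/2) δ < ε
  obtain ⟨u, hu, hIco⟩ := mem_nhdsGE_iff_exists_Ico_subset.mp hev
  rw [Set.mem_Ioi] at hu
  have hδpos : (0:ℝ) < u / 2 := by positivity
  have hδ : θ (ε/2) (u/2) < ε := hIco ⟨hδpos.le, by linarith⟩
  -- eventually s n < ε/2 and t n < u/2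
  have h1 : ∀ᶠ n in atTop, s n < ε/2 := hs0.eventually_lt_const hε2
  have h2 : ∀ᶠ n in atTop, t n < u/2 := ht0.eventually_lt_const hδpos
  filter_upwards [h1, h2] with n hn1 hn2
  have hb : θ (s n) (t n) < θ (ε/2) (u/2) :=
    hmono _ _ _ _ (hs n) (ht n) hε2.le hδpos.le (Or.inr ⟨hn1, hn2.le⟩)
  have hnn' := hnn _ _ (hs n) (ht n)
  rw [Real.dist_eq, sub_zero, abs_of_nonneg hnn']
  linarith
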